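/- Let n ≥ 1, let ζ = exp(2πi/n) ∈ ℂ, and let t ∈ ℂ with |t| = 1. For every index k with 1 ≤ k ≤ n − 1 such that k and n have different parity (k ≢ n mod 2), the coefficient of x^k in f_t is zero: (f_t).coeff k = 0. In particular the coefficients of x^(n−1), x^(n−3), x^(n−5), … all vanish (excluding the constant term when n is odd). -/

import Mathlib

open Polynomial Finset

lemma aux_prod {n : ℕ} (hn : n ≠ 0) {ζ : ℂ} (hprim : IsPrimitiveRoot ζ n) (t z : ℂ) :
    ∏ i ∈ Finset.range n, (z - ζ ^ i * t) = z ^ n - t ^ n := by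
  have h1 : nthRoots n (t ^ n) = (Multiset.range n).map (fun i => ζ ^ i * t) :=
    hprim.nthRoots_eq rfl
  have hmonic : (X ^ n - C (t ^ n) : ℂ[X]).Monic := monic_X_pow_sub_C _ hn
  have hpoly : (X ^ n - C (t ^ n) : ℂ[X]) =
      ∏ i ∈ Finset.range n, (X - C (ζ ^ i * t)) := by
    have hcard : Multiset.card (X ^ n - C (t ^ n) : ℂ[X]).roots =
        (X ^ n - C (t ^ n) : ℂ[X]).natDegree := by
      rw [show (X ^ n - C (t ^ n) : ℂ[X]).roots = nthRoots n (t ^ n) from rfl, h1,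
        natDegree_X_pow_sub_C]
      simp
    have h2 := prod_multiset_X_sub_C_of_monic_of_roots_card_eq hmonic hcard
    rw [show (X ^ n - C (t ^ n) : ℂ[X]).roots = nthRoots n (t ^ n) from rfl, h1] at h2
    rw [← h2]
    simp [Finset.prod, Multiset.map_map]
  have := congrArg (Polynomial.eval z) hpoly
  simp only [eval_sub, eval_pow, eval_X, eval_C, eval_prod, eval_mul] at this
  rw [← this]

lemma key {n : ℕ} (hn : n ≠ 0) {ζ : ℂ} (hprim : IsPrimitiveRoot ζ n)
    (hζ1 : ‖ζ‖ = 1) {t : ℂ} (ht : ‖t‖ = 1)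
    {x u : ℂ} (hu : u ≠ 0) (hux : u + u⁻¹ = 2 * x) :
    2 ^ n * u ^ n * t ^ n * ∏ i ∈ Finset.range n, (x - ((t * ζ ^ i).re : ℂ))
      = (u ^ n - t ^ n) * (u ^ n * t ^ n - 1) := by
  have ht0 : t ≠ 0 := by
    intro h; rw [h] at ht; simp at ht
  -- |t * ζ^i| = 1, hence (t*ζ^i)⁻¹ = conj (t*ζ^i), and 2*re w = w + w⁻¹
  have hre : ∀ i : ℕ, (((t * ζ ^ i).re : ℂ)) * 2 = t * ζ ^ i + (t * ζ ^ i)⁻¹ := by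
    intro i
    set w := t * ζ ^ i with hw
    have habs : ‖w‖ = 1 := by
      simp [hw, map_mul, map_pow, ht, hζ1]
    have hconj : w⁻¹ = (starRingEnd ℂ) w := by
      have h1 : w * (starRingEnd ℂ) w = 1 := by
        rw [Complex.mul_conj, ← Complex.sq_norm, habs]; norm_num
      exact inv_eq_of_mul_eq_one_right h1
    rw [hconj, Complex.add_conj]
    push_cast
    ring
  have hw0 : ∀ i : ℕ, t * ζ ^ i ≠ 0 := by
    intro i
    exact mul_ne_zero ht0 (pow_ne_zero _ (by intro h; rw [h] at hζ1; simp at hζ1))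
  have hfac : ∀ i ∈ Finset.range n,
      2 * u * (t * ζ ^ i) * (x - ((t * ζ ^ i).re : ℂ))
        = -((t * ζ ^ i - u) * (u * (t * ζ ^ i) - 1)) := by
    intro i _
    have h := hre i
    have hw := hw0 i
    have h2 : ((t * ζ ^ i).re : ℂ) * 2 * (t * ζ ^ i) = (t * ζ ^ i) ^ 2 + 1 := by
      have h3 := congrArg (· * (t * ζ ^ i)) h
      simp only [add_mul, inv_mul_cancel₀ hw] at h3
      linear_combination h3
    have hux2 : 2 * x * u = u ^ 2 + 1 := by
      have h3 := congrArg (· * u) hux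
      simp only [add_mul, inv_mul_cancel₀ hu] at h3
      linear_combination -h3
    linear_combination (t * ζ ^ i) * hux2 - u * h2
  have hc := Finset.prod_congr rfl hfac
  have hL : ∏ i ∈ Finset.range n, (2 * u * (t * ζ ^ i) * (x - ((t * ζ ^ i).re : ℂ)))
      = 2 ^ n * u ^ n * (∏ i ∈ Finset.range n, (t * ζ ^ i))
        * ∏ i ∈ Finset.range n, (x - ((t * ζ ^ i).re : ℂ)) := by
    simp only [Finset.prod_mul_distrib, Finset.prod_const, Finset.card_range, mul_pow]
  have hR : ∏ i ∈ Finset.range n, (-((t * ζ ^ i - u) * (u * (t * ζ ^ i) - 1)))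
      = (-1) ^ n * ((∏ i ∈ Finset.range n, (t * ζ ^ i - u))
        * ∏ i ∈ Finset.range n, (u * (t * ζ ^ i) - 1)) := by
    calc ∏ i ∈ Finset.range n, (-((t * ζ ^ i - u) * (u * (t * ζ ^ i) - 1)))
        = ∏ i ∈ Finset.range n, ((-1) * ((t * ζ ^ i - u) * (u * (t * ζ ^ i) - 1))) := by
          simp only [neg_one_mul]
      _ = _ := by
          simp only [Finset.prod_mul_distrib, Finset.prod_const, Finset.card_range]
  rw [hL, hR] at hc
  have hA : ∏ i ∈ Finset.range n, (t * ζ ^ i - u) = (-1) ^ n * (u ^ n - t ^ n) := by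
    calc ∏ i ∈ Finset.range n, (t * ζ ^ i - u)
        = ∏ i ∈ Finset.range n, ((-1) * (u - ζ ^ i * t)) :=
          Finset.prod_congr rfl (fun i _ => by ring)
      _ = (-1) ^ n * ∏ i ∈ Finset.range n, (u - ζ ^ i * t) := by
          simp only [Finset.prod_mul_distrib, Finset.prod_const, Finset.card_range]
      _ = (-1) ^ n * (u ^ n - t ^ n) := by rw [aux_prod hn hprim]
  have hB : ∏ i ∈ Finset.range n, (u * (t * ζ ^ i) - 1)
      = (-1) ^ n * (1 - u ^ n * t ^ n) := by
    calc ∏ i ∈ Finset.range n, (u * (t * ζ ^ i) - 1)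
        = ∏ i ∈ Finset.range n, ((-1) * (1 - ζ ^ i * (u * t))) :=
          Finset.prod_congr rfl (fun i _ => by ring)
      _ = (-1) ^ n * ∏ i ∈ Finset.range n, (1 - ζ ^ i * (u * t)) := by
          simp only [Finset.prod_mul_distrib, Finset.prod_const, Finset.card_range]
      _ = (-1) ^ n * (1 - u ^ n * t ^ n) := by
          rw [aux_prod hn hprim (u * t) 1]; rw [mul_pow, one_pow]
  have hW : (-1 : ℂ) ^ n * ∏ i ∈ Finset.range n, (t * ζ ^ i) = -(t ^ n) := by
    calc (-1 : ℂ) ^ n * ∏ i ∈ Finset.range n, (t * ζ ^ i)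
        = ∏ i ∈ Finset.range n, ((-1 : ℂ) * (t * ζ ^ i)) := by
          simp only [Finset.prod_mul_distrib, Finset.prod_const, Finset.card_range]
      _ = ∏ i ∈ Finset.range n, ((0 : ℂ) - ζ ^ i * t) :=
          Finset.prod_congr rfl (fun i _ => by ring)
      _ = 0 ^ n - t ^ n := aux_prod hn hprim t 0
      _ = -(t ^ n) := by rw [zero_pow hn]; ring
  rw [hA, hB] at hc
  rcases Nat.even_or_odd n with h | h
  · rw [h.neg_one_pow] at hc hW
    rw [one_mul] at hW
    rw [hW] at hc
    linear_combination -hc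
  · rw [h.neg_one_pow] at hc hW
    have hW' : ∏ i ∈ Finset.range n, (t * ζ ^ i) = t ^ n := by linear_combination -hW
    rw [hW'] at hc
    linear_combination hc

lemma two_re_eq {w : ℂ} (hw : ‖w‖ = 1) : ((2 * w.re : ℝ) : ℂ) = w + w⁻¹ := by
  have h1 : w * (starRingEnd ℂ) w = 1 := by
    rw [Complex.mul_conj, ← Complex.sq_norm, hw]; norm_num
  rw [inv_eq_of_mul_eq_one_right h1, Complex.add_conj]

lemma exists_u (x : ℂ) : ∃ u : ℂ, u ≠ 0 ∧ u + u⁻¹ = 2 * x := by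
  obtain ⟨s, hs⟩ := IsAlgClosed.exists_pow_nat_eq (x ^ 2 - 1) (n := 2) (by norm_num)
  have hsq : (x + s) * (2 * x - (x + s)) = 1 := by linear_combination -hs
  have h0 : x + s ≠ 0 := by
    intro h
    rw [h] at hsq; simp at hsq
  refine ⟨x + s, h0, ?_⟩
  rw [inv_eq_of_mul_eq_one_right hsq]
  ring

lemma key4 {n : ℕ} (hn : n ≠ 0) {ζ : ℂ} (hprim : IsPrimitiveRoot ζ n)
    (hζ1 : ‖ζ‖ = 1) {t : ℂ} (ht : ‖t‖ = 1)
    {x u : ℂ} (hu : u ≠ 0) (hux : u + u⁻¹ = 2 * x) :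
    2 ^ n * (∏ i ∈ Finset.range n, (x - ((t * ζ ^ i).re : ℂ)))
        + (t ^ n + (starRingEnd ℂ) (t ^ n))
      = 2 ^ n * (∏ i ∈ Finset.range n, (x - ((-t * ζ ^ i).re : ℂ)))
        + ((-t) ^ n + (starRingEnd ℂ) ((-t) ^ n)) := by
  have ht' : ‖-t‖ = 1 := by simpa using ht
  have ht0 : t ≠ 0 := by intro h; rw [h] at ht; simp at ht
  have htn : t ^ n ≠ 0 := pow_ne_zero _ ht0
  have hun : u ^ n ≠ 0 := pow_ne_zero _ hu
  have h1 := key hn hprim hζ1 ht hu hux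
  have h2 := key hn hprim hζ1 ht' hu hux
  have hconj : (starRingEnd ℂ) (t ^ n) * t ^ n = 1 := by
    rw [mul_comm, Complex.mul_conj, ← Complex.sq_norm, norm_pow, ht]
    norm_num
  rcases Nat.even_or_odd n with h | h
  · rw [h.neg_pow] at h2 ⊢
    apply mul_left_cancel₀ hun
    apply mul_left_cancel₀ htn
    linear_combination h1 - h2
  · rw [h.neg_pow] at h2 ⊢
    rw [map_neg]
    apply mul_left_cancel₀ hun
    apply mul_left_cancel₀ htn
    linear_combination h1 + h2 + (2 * u ^ n) * hconj

lemma coeff_comp_neg_X (p : Polynomial ℝ) (k : ℕ) :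
    (p.comp (-X)).coeff k = (-1) ^ k * p.coeff k := by
  induction p using Polynomial.induction_on' with
  | add p q hp hq => simp [add_comp, hp, hq, mul_add]
  | monomial m a =>
    have hmc : (monomial m a).comp (-X) = C ((-1) ^ m * a) * X ^ m := by
      rw [C_mul, monomial_comp, neg_pow, ← C_1, ← C_neg, ← C_pow]
      ring
    rw [hmc, coeff_C_mul, coeff_monomial, coeff_X_pow]
    rcases eq_or_ne m k with rfl | h
    · simp
    · simp [h, Ne.symm h]


/-- All coefficients of `f_t` whose index has parity different from `n`
(and index between `1` and `n-1`) vanish. -/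
theorem coeff_ne_parity_eq_zero (n : ℕ) (hn : 1 ≤ n)
    (ζ : ℂ) (hζ : ζ = Complex.exp (2 * Real.pi * Complex.I / n))
    (t : ℂ) (ht : ‖t‖ = 1)
    (k : ℕ) (hk1 : 1 ≤ k) (hk2 : k ≤ n - 1) (hpar : k % 2 ≠ n % 2) :
    (∏ i ∈ Finset.range n, (X - C (Complex.re (t * ζ ^ i)))).coeff k = 0 := by
  have hn0 : n ≠ 0 := by omega
  have hprim : IsPrimitiveRoot ζ n := by
    rw [hζ]; exact Complex.isPrimitiveRoot_exp n hn0
  have hζ1 : ‖ζ‖ = 1 := by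
    rw [hζ, Complex.norm_exp]
    have h0 : (2 * (Real.pi : ℂ) * Complex.I / n).re = 0 := by
      rw [Complex.div_re]
      simp
    rw [h0, Real.exp_zero]
  set P : Polynomial ℝ := ∏ i ∈ Finset.range n, (X - C (Complex.re (t * ζ ^ i))) with hP
  set Q : Polynomial ℝ := ∏ i ∈ Finset.range n, (X - C (Complex.re (-t * ζ ^ i))) with hQdef
  have h5 : ∀ w : ℂ, (w.re : ℂ) * 2 = w + (starRingEnd ℂ) w := by
    intro w
    rw [Complex.add_conj]
    push_cast
    ring
  have hPQ : C ((2:ℝ)^n) * P + C (2 * (t^n).re)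
      = C ((2:ℝ)^n) * Q + C (2 * ((-t)^n).re) := by
    apply Polynomial.funext
    intro x
    obtain ⟨u, hu0, hux⟩ := exists_u (x : ℂ)
    have hk4 := key4 hn0 hprim hζ1 ht hu0 hux (x := (x : ℂ))
    apply Complex.ofReal_injective
    push_cast [eval_add, eval_mul, eval_C, eval_prod, eval_sub, eval_X, hP, hQdef]
    linear_combination hk4 + h5 (t ^ n) - h5 ((-t) ^ n)
  have hcoeff := congrArg (fun p => Polynomial.coeff p k) hPQ
  simp only [coeff_add, coeff_C_mul, coeff_C, if_neg (by omega : ¬ k = 0), add_zero] at hcoeff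
  have h2n : ((2:ℝ)^n) ≠ 0 := by positivity
  have hPQk : P.coeff k = Q.coeff k := mul_left_cancel₀ h2n hcoeff
  have hQ2 : Q = C ((-1:ℝ)^n) * P.comp (-X) := by
    rw [hQdef, hP, Polynomial.prod_comp]
    simp only [sub_comp, X_comp, C_comp]
    rw [eq_comm]
    calc C ((-1:ℝ)^n) * ∏ i ∈ Finset.range n, (-X - C ((t * ζ ^ i).re))
        = ∏ i ∈ Finset.range n, (C (-1:ℝ) * (-X - C ((t * ζ ^ i).re))) := by
          rw [Finset.prod_mul_distrib, Finset.prod_const, Finset.card_range, C_pow]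
      _ = ∏ i ∈ Finset.range n, (X - C ((-t * ζ ^ i).re)) :=
          Finset.prod_congr rfl fun i _ => by
            simp only [neg_mul, Complex.neg_re, map_neg, map_one]
            ring
  have hQk : Q.coeff k = (-1:ℝ)^n * ((-1)^k * P.coeff k) := by
    rw [hQ2, coeff_C_mul, coeff_comp_neg_X]
  have hsign : ((-1:ℝ)^n) * (-1)^k = -1 := by
    rcases Nat.even_or_odd n with h | h <;> rcases Nat.even_or_odd k with h' | h'
    · rw [Nat.even_iff] at h h'; exfalso; apply hpar; omega
    · simp [h.neg_one_pow, h'.neg_one_pow]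
    · simp [h.neg_one_pow, h'.neg_one_pow]
    · rw [Nat.odd_iff] at h h'; exfalso; apply hpar; omega
  have hfin : P.coeff k = -1 * P.coeff k := by
    calc P.coeff k = Q.coeff k := hPQk
      _ = (-1)^n * ((-1)^k * P.coeff k) := hQk
      _ = -1 * P.coeff k := by rw [← mul_assoc, hsign]
  linarith
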